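/- Let D be an idempotent-complete triangulated category with an admissible G-action, |G| invertible in D, and D^G carrying the canonical triangulated structure. If T is a G-invariant tilting object of D (i.e., F_g(T) ≅ T for all g, Hom^i(T,T) = 0 for i ≠ 0, and T classically generates D), then Ind(T) is a tilting object of D^G. -/

import Mathlib

open CategoryTheory Limits
universe v u
variable {G : Type*} [Group G] {A : Type u} [Category.{v} A]

structure GAction (G : Type*) [Group G] (A : Type u) [Category.{v} A] where
  F : G → A ⥤ A
  equiv : ∀ g, (F g).IsEquivalence
  δ : ∀ g h : G, F h ⋙ F g ≅ F (h * g)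
  cocycle : ∀ (g h l : G) (X : A),
    (F g).map ((δ h l).hom.app X) ≫ (δ g (l * h)).hom.app X ≫
      eqToHom (congrArg (fun m => (F m).obj X) (mul_assoc l h g)) =
    (δ g h).hom.app ((F l).obj X) ≫ (δ (h * g) l).hom.app X

structure EqObj (act : GAction G A) where
  obj : A
  lam : ∀ g : G, (act.F g).obj obj ≅ obj
  compat : ∀ g h : G,
    (act.F g).map (lam h).hom ≫ (lam g).hom =
      (act.δ g h).hom.app obj ≫ (lam (h * g)).hom

namespace EqObj

variable {act : GAction G A}

@[ext]
structure EqHom (X Y : EqObj act) where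
  f : X.obj ⟶ Y.obj
  comm : ∀ g : G, (act.F g).map f ≫ (Y.lam g).hom = (X.lam g).hom ≫ f

instance : Category (EqObj act) where
  Hom := EqHom
  id X := ⟨𝟙 X.obj, by intro g; simp⟩
  comp {X Y Z} u v := ⟨u.f ≫ v.f, by
    intro g
    rw [Functor.map_comp, Category.assoc, v.comm, ← Category.assoc, u.comm, Category.assoc]⟩

@[ext]
lemma hom_ext {X Y : EqObj act} {u v : X ⟶ Y} (h : u.f = v.f) : u = v := EqHom.ext h

@[simp] lemma id_f (X : EqObj act) : (𝟙 X : X ⟶ X).f = 𝟙 X.obj := rfl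
@[simp] lemma comp_f {X Y Z : EqObj act} (u : X ⟶ Y) (v : Y ⟶ Z) :
    (u ≫ v).f = u.f ≫ v.f := rfl

@[simps]
def forget (act : GAction G A) : EqObj act ⥤ A where
  obj X := X.obj
  map u := u.f

section Preadditive

variable [Preadditive A] [∀ g : G, (act.F g).Additive]

instance instAddHom (X Y : EqObj act) : Add (X ⟶ Y) :=
  ⟨fun u v => ⟨u.f + v.f, fun g => by
    simp [Preadditive.add_comp, Preadditive.comp_add, u.comm g, v.comm g]⟩⟩

instance instZeroHom (X Y : EqObj act) : Zero (X ⟶ Y) :=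
  ⟨⟨0, fun g => by simp⟩⟩

instance instNegHom (X Y : EqObj act) : Neg (X ⟶ Y) :=
  ⟨fun u => ⟨-u.f, fun g => by
    simp [Preadditive.neg_comp, Preadditive.comp_neg, u.comm g]⟩⟩

instance homAddCommGroup (X Y : EqObj act) : AddCommGroup (X ⟶ Y) where
  add := (· + ·)
  zero := 0
  neg := Neg.neg
  add_assoc := fun a b c => hom_ext (add_assoc a.f b.f c.f)
  zero_add := fun a => hom_ext (zero_add a.f)
  add_zero := fun a => hom_ext (add_zero a.f)
  nsmul := nsmulRec
  zsmul := zsmulRec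
  neg_add_cancel := fun a => hom_ext (neg_add_cancel a.f)
  add_comm := fun a b => hom_ext (add_comm a.f b.f)

instance : Preadditive (EqObj act) where
  homGroup := homAddCommGroup
  add_comp _ _ _ f f' g := hom_ext (Preadditive.add_comp _ _ _ f.f f'.f g.f)
  comp_add _ _ _ f g g' := hom_ext (Preadditive.comp_add _ _ _ f.f g.f g'.f)

@[simp] lemma add_f {X Y : EqObj act} (u v : X ⟶ Y) : (u + v).f = u.f + v.f := rfl
@[simp] lemma zero_f (X Y : EqObj act) : (0 : X ⟶ Y).f = 0 := rfl

instance : (forget act).Additive where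
  map_add := rfl

end Preadditive

end EqObj

/-- A functor is *separable* if the induced transformation on hom-sets admits a natural
retraction. -/
def CategoryTheory.Functor.Separable {C : Type*} [Category C] {B : Type*} [Category B]
    (F : C ⥤ B) : Prop :=
  ∃ Φ : ∀ X Y : C, (F.obj X ⟶ F.obj Y) → (X ⟶ Y),
    (∀ (X Y : C) (f : X ⟶ Y), Φ X Y (F.map f) = f) ∧
    (∀ (X' X Y Y' : C) (u : X' ⟶ X) (v : Y ⟶ Y') (h : F.obj X ⟶ F.obj Y),
      Φ X' Y' (F.map u ≫ h ≫ F.map v) = u ≫ Φ X Y h ≫ v)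

/-- `n` is invertible in an additive category `A` if every morphism is uniquely divisible
by `n`. -/
def NatInvertibleIn (n : ℕ) (A : Type u) [Category.{v} A] [Preadditive A] : Prop :=
  ∀ ⦃X Y : A⦄ (f : X ⟶ Y), ∃! g : X ⟶ Y, n • g = f

/-- A functor `A ⥤ A^G` *is the induction functor* if its composite with the forgetful
functor is naturally isomorphic to `X ↦ ⊕_{g ∈ G} F_g(X)`. -/
def IsInduction [Preadditive A] [HasFiniteBiproducts A] [Fintype G] (act : GAction G A)
    (Ind : A ⥤ EqObj act) : Prop :=
  ∃ iso : ∀ X : A, (EqObj.forget act).obj (Ind.obj X) ≅ ⨁ (fun g : G => (act.F g).obj X),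
    ∀ (X Y : A) (f : X ⟶ Y),
      (EqObj.forget act).map (Ind.map f) ≫ (iso Y).hom =
        (iso X).hom ≫ biproduct.map (fun g => (act.F g).map f)

/-- `Ξ` is the unit of the action `act`. -/
def IsActionUnit (act : GAction G A) (Ξ : act.F (1 : G) ≅ 𝟭 A) : Prop :=
  (∀ X : A, (act.F (1 : G)).map (Ξ.hom.app X) =
      (act.δ (1 : G) (1 : G)).hom.app X ≫
        eqToHom (congrArg (fun m => (act.F m).obj X) (one_mul (1 : G)))) ∧
  (∀ X : A, Ξ.hom.app ((act.F (1 : G)).obj X) =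
      (act.δ (1 : G) (1 : G)).hom.app X ≫
        eqToHom (congrArg (fun m => (act.F m).obj X) (one_mul (1 : G))))

/-- A `G`-equivariant structure on a functor `F` between two categories with
`G`-actions. -/
structure EquivStructure {B : Type*} [Category B]
    (actA : GAction G A) (actB : GAction G B) (F : A ⥤ B) where
  φ : ∀ g : G, actA.F g ⋙ F ≅ F ⋙ actB.F g
  square : ∀ (g h : G) (X : A),
    (φ g).hom.app ((actA.F h).obj X) ≫ (actB.F g).map ((φ h).hom.app X) ≫
        (actB.δ g h).hom.app (F.obj X) =
      F.map ((actA.δ g h).hom.app X) ≫ (φ (h * g)).hom.app X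
  triangle : ∀ (Ξ : actA.F (1 : G) ≅ 𝟭 A) (Υ : actB.F (1 : G) ≅ 𝟭 B),
    IsActionUnit actA Ξ → IsActionUnit actB Υ →
    ∀ X : A, (φ (1 : G)).hom.app X ≫ Υ.hom.app (F.obj X) = F.map (Ξ.hom.app X)

section Triangulated

open ZeroObject

variable {D : Type u} [Category.{v} D] [Preadditive D] [HasZeroObject D]
  [HasShift D ℤ] [∀ n : ℤ, (shiftFunctor D n).Additive] [Pretriangulated D]
variable (act : GAction G D) [∀ g : G, (act.F g).Additive]

/-- The zero object of `A^G`. -/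
noncomputable def EqObj.zeroEq : EqObj act where
  obj := 0
  lam g := (act.F g).mapZeroObject
  compat g h := (isZero_zero D).eq_of_tgt _ _

lemma EqObj.isZero_zeroEq : IsZero (EqObj.zeroEq act) := by
  rw [IsZero.iff_id_eq_zero]
  apply EqObj.hom_ext
  exact (isZero_zero D).eq_of_tgt _ _

instance : HasZeroObject (EqObj act) := ⟨⟨EqObj.zeroEq act, EqObj.isZero_zeroEq act⟩⟩

open Pretriangulated

/-- The action `act` is admissible: each `F_g` is exact (commutes with the shift and
preserves distinguished triangles), and the commuting isomorphisms make the shift functor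
`[1]` a `G`-equivariant functor. -/
structure AdmissibleOn [∀ g : G, (act.F g).CommShift ℤ] : Prop where
  exact : ∀ (g : G), ∀ T ∈ distTriang D, (act.F g).mapTriangle.obj T ∈ distTriang D
  shift_equivariant : ∃ e : EquivStructure act act (shiftFunctor D (1 : ℤ)),
    ∀ g : G, e.φ g = ((act.F g).commShiftIso (1 : ℤ)).symm

end Triangulated

section Thick

open Pretriangulated

variable {C : Type*} [Category C] [Preadditive C] [HasZeroObject C] [HasShift C ℤ]
  [∀ n : ℤ, (shiftFunctor C n).Additive] [Pretriangulated C]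

/-- A class of objects of a pretriangulated category is thick if it is closed under
isomorphism, shifts, retracts (direct summands) and extensions (cones). -/
def IsThickSet (S : Set C) : Prop :=
  (∀ X ∈ S, ∀ Y : C, Nonempty (X ≅ Y) → Y ∈ S) ∧
  (∀ X ∈ S, ∀ n : ℤ, X⟦n⟧ ∈ S) ∧
  (∀ X ∈ S, ∀ (Y : C) (s : Y ⟶ X) (r : X ⟶ Y), s ≫ r = 𝟙 Y → Y ∈ S) ∧
  (∀ T ∈ distTriang C, T.obj₁ ∈ S → T.obj₂ ∈ S → T.obj₃ ∈ S)

/-- `T` classically generates `C` if `C` is the smallest thick subcategory of itself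
containing `T`. -/
def ClassicallyGenerates (T : C) : Prop :=
  ∀ S : Set C, IsThickSet S → T ∈ S → ∀ X : C, X ∈ S

/-- `T` is a tilting object: self-extensions vanish in nonzero degrees and `T`
classically generates. -/
def IsTilting (T : C) : Prop :=
  (∀ i : ℤ, i ≠ 0 → ∀ f : T ⟶ T⟦i⟧, f = 0) ∧ ClassicallyGenerates T

end Thick

section AuxTilting
open Pretriangulated

/-- An additive functor preserves biproducts (arbitrary universe version). -/
lemma preservesBiproduct_of_additive' {C₁ : Type*} {D₁ : Type*} [Category C₁] [Category D₁]
    [Preadditive C₁] [Preadditive D₁] (F : C₁ ⥤ D₁) [F.Additive] {J : Type*} [Fintype J]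
    (bf : J → C₁) : Limits.PreservesBiproduct bf F := by
  obtain ⟨e⟩ : Nonempty (Fin (Fintype.card J) ≃ J) := ⟨(Fintype.equivFin J).symm⟩
  constructor
  intro b hb
  exact ⟨((F.mapBicone b).whiskerIsBilimitIff e).toFun
    (isBilimitOfPreserves F ((b.whiskerIsBilimitIff e).invFun hb))⟩

variable {D : Type u} [Category.{v} D] [Preadditive D] [HasZeroObject D]
  [HasShift D ℤ] [∀ n : ℤ, (shiftFunctor D n).Additive] [Pretriangulated D]
  {act : GAction G D} [∀ g : G, (act.F g).Additive]
  [HasShift (EqObj act) ℤ] [∀ n : ℤ, (shiftFunctor (EqObj act) n).Additive]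
  [(EqObj.forget act).CommShift ℤ] [Pretriangulated (EqObj act)]

/-- If the underlying morphism of an equivariant morphism is a split epimorphism, then
the morphism itself is a split epimorphism. -/
lemma splitEpi_of_forget_splitEpi {A' X : EqObj act} (φ : A' ⟶ X)
    (t : X.obj ⟶ A'.obj) (ht : t ≫ φ.f = 𝟙 X.obj) :
    ∃ σ : X ⟶ A', σ ≫ φ = 𝟙 X := by
  obtain ⟨B, m, h', mem⟩ := Pretriangulated.distinguished_cocone_triangle₁ φ
  have h0 : φ ≫ h' = 0 := comp_distTriang_mor_zero₂₃ _ mem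
  have hf0 : h'.f = 0 := by
    have h1 : φ.f ≫ h'.f = 0 := by
      rw [← EqObj.comp_f, h0, EqObj.zero_f]
    rw [← Category.id_comp h'.f, ← ht, Category.assoc, h1, comp_zero]
  have h'0 : h' = 0 := EqObj.hom_ext (by rw [hf0, EqObj.zero_f])
  obtain ⟨σ, hσ⟩ := Pretriangulated.Triangle.coyoneda_exact₃ _ mem (𝟙 X) (by
    show 𝟙 X ≫ h' = 0
    rw [h'0, comp_zero])
  exact ⟨σ, hσ.symm⟩

/-- Surjectivity of the "shifted adjunction" map: any morphism `A⟦n⟧ ⟶ forget W` factors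
through the canonical morphism `A⟦n⟧ ⟶ forget ((Ind A)⟦n⟧)`. -/
lemma ind_shift_surj (Ind : D ⥤ EqObj act) (adj₁ : Ind ⊣ EqObj.forget act)
    (n : ℤ) (A' : D) (W : EqObj act) (w : A'⟦n⟧ ⟶ (EqObj.forget act).obj W) :
    ∃ χ : (Ind.obj A')⟦n⟧ ⟶ W,
      (adj₁.unit.app A')⟦n⟧' ≫
        ((EqObj.forget act).commShiftIso n).inv.app (Ind.obj A') ≫
        (EqObj.forget act).map χ = w := by
  have h2 : n + -n = 0 := add_neg_cancel n
  have h1 : -n + n = 0 := neg_add_cancel n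
  set ψ : A' ⟶ (EqObj.forget act).obj (W⟦(-n : ℤ)⟧) :=
    (shiftFunctorCompIsoId D n (-n) h2).inv.app A' ≫ w⟦(-n : ℤ)⟧' ≫
      ((EqObj.forget act).commShiftIso (-n : ℤ)).inv.app W with hψ
  set φ₀ : Ind.obj A' ⟶ W⟦(-n : ℤ)⟧ := (adj₁.homEquiv _ _).symm ψ with hφ₀
  have hφ : adj₁.unit.app A' ≫ (EqObj.forget act).map φ₀ = ψ := by
    have h := (adj₁.homEquiv A' (W⟦(-n : ℤ)⟧)).apply_symm_apply ψ
    rwa [Adjunction.homEquiv_unit] at h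
  refine ⟨φ₀⟦n⟧' ≫ (shiftFunctorCompIsoId (EqObj act) (-n) n h1).hom.app W, ?_⟩
  rw [(EqObj.forget act).map_comp]
  have nat1 : ((EqObj.forget act).commShiftIso n).inv.app (Ind.obj A') ≫
      (EqObj.forget act).map (φ₀⟦n⟧') =
      ((EqObj.forget act).map φ₀)⟦n⟧' ≫
        ((EqObj.forget act).commShiftIso n).inv.app (W⟦(-n : ℤ)⟧) :=
    (((EqObj.forget act).commShiftIso n).inv.naturality φ₀).symm
  rw [← Category.assoc (((EqObj.forget act).commShiftIso n).inv.app (Ind.obj A')), nat1]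
  rw [(EqObj.forget act).map_shiftFunctorCompIsoId_hom_app W (-n) n h1]
  calc (adj₁.unit.app A')⟦n⟧' ≫
        (((EqObj.forget act).map φ₀)⟦n⟧' ≫
          ((EqObj.forget act).commShiftIso n).inv.app (W⟦(-n : ℤ)⟧)) ≫
        (((EqObj.forget act).commShiftIso n).hom.app (W⟦(-n : ℤ)⟧) ≫
          (((EqObj.forget act).commShiftIso (-n : ℤ)).hom.app W)⟦n⟧' ≫
          (shiftFunctorCompIsoId D (-n) n h1).hom.app ((EqObj.forget act).obj W))
      = (adj₁.unit.app A')⟦n⟧' ≫ ((EqObj.forget act).map φ₀)⟦n⟧' ≫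
          (((EqObj.forget act).commShiftIso (-n : ℤ)).hom.app W)⟦n⟧' ≫
          (shiftFunctorCompIsoId D (-n) n h1).hom.app ((EqObj.forget act).obj W) := by
        simp only [Category.assoc, Iso.inv_hom_id_app_assoc]
    _ = ((adj₁.unit.app A' ≫ (EqObj.forget act).map φ₀) ≫
          ((EqObj.forget act).commShiftIso (-n : ℤ)).hom.app W)⟦n⟧' ≫
          (shiftFunctorCompIsoId D (-n) n h1).hom.app ((EqObj.forget act).obj W) := by
        simp only [Functor.map_comp, Category.assoc]
    _ = (((shiftFunctorCompIsoId D n (-n) h2).inv.app A' ≫ w⟦(-n : ℤ)⟧'))⟦n⟧' ≫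
          (shiftFunctorCompIsoId D (-n) n h1).hom.app ((EqObj.forget act).obj W) := by
        rw [hφ, hψ]
        simp only [Category.assoc, Iso.inv_hom_id_app, Functor.comp_obj, Category.comp_id]
    _ = ((shiftFunctorCompIsoId D n (-n) h2).inv.app A')⟦n⟧' ≫
          (shiftFunctorCompIsoId D (-n) n h1).hom.app (A'⟦n⟧) ≫ w := by
        rw [Functor.map_comp, Category.assoc]
        erw [(shiftFunctorCompIsoId D (-n) n h1).hom.naturality w]
        rfl
    _ = w := by
        rw [shift_shiftFunctorCompIsoId_add_neg_cancel_inv_app, ← Category.assoc,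
          Iso.inv_hom_id_app]
        simp

/-- Every equivariant object is a retract of the induction of its underlying object. -/
lemma retract_of_ind (Ind : D ⥤ EqObj act) (adj₁ : Ind ⊣ EqObj.forget act) (X : EqObj act) :
    ∃ (s : X ⟶ Ind.obj X.obj) (r : Ind.obj X.obj ⟶ X), s ≫ r = 𝟙 X := by
  obtain ⟨σ, hσ⟩ := splitEpi_of_forget_splitEpi (adj₁.counit.app X)
    (adj₁.unit.app X.obj) (adj₁.right_triangle_components X)
  exact ⟨σ, adj₁.counit.app X, hσ⟩

/-- Given a distinguished triangle in `D`, the induction of its third object is a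
retract of the cone (computed in `D^G`) of the induction of its first morphism. -/
lemma ind_cone_retract (Ind : D ⥤ EqObj act) (adj₁ : Ind ⊣ EqObj.forget act)
    (hdist : ∀ T : Triangle (EqObj act),
      (T ∈ distTriang (EqObj act)) ↔
        ((EqObj.forget act).mapTriangle.obj T ∈ distTriang D))
    (TD : Triangle D) (hTD : TD ∈ distTriang D) :
    ∃ (Z : EqObj act) (u : Ind.obj TD.obj₂ ⟶ Z) (v : Z ⟶ (Ind.obj TD.obj₁)⟦(1 : ℤ)⟧)
      (σ : Ind.obj TD.obj₃ ⟶ Z) (τ : Z ⟶ Ind.obj TD.obj₃),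
      (Triangle.mk (Ind.map TD.mor₁) u v ∈ distTriang (EqObj act)) ∧
        σ ≫ τ = 𝟙 (Ind.obj TD.obj₃) := by
  obtain ⟨Z, u, v, hTz⟩ := Pretriangulated.distinguished_cocone_triangle (Ind.map TD.mor₁)
  have hfTz : (EqObj.forget act).mapTriangle.obj (Triangle.mk (Ind.map TD.mor₁) u v) ∈
      distTriang D := (hdist _).1 hTz
  obtain ⟨b₃, hb₂, hb₃⟩ := Pretriangulated.complete_distinguished_triangle_morphism
    TD ((EqObj.forget act).mapTriangle.obj (Triangle.mk (Ind.map TD.mor₁) u v)) hTD hfTz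
    (adj₁.unit.app TD.obj₁) (adj₁.unit.app TD.obj₂) (adj₁.unit.naturality TD.mor₁)
  change TD.obj₃ ⟶ (EqObj.forget act).obj Z at b₃
  have hb₂' : TD.mor₂ ≫ b₃ = adj₁.unit.app TD.obj₂ ≫ (EqObj.forget act).map u := by
    exact hb₂
  have hb₃' : TD.mor₃ ≫ (adj₁.unit.app TD.obj₁)⟦(1 : ℤ)⟧' =
      b₃ ≫ (EqObj.forget act).map v ≫
        ((EqObj.forget act).commShiftIso (1 : ℤ)).hom.app (Ind.obj TD.obj₁) := by
    exact hb₃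
  -- b₃ : TD.obj₃ ⟶ forget Z
  set y : TD.obj₃ ⟶ (EqObj.forget act).obj (Ind.obj TD.obj₃) :=
    adj₁.unit.app TD.obj₃ with hy
  set z : Ind.obj TD.obj₂ ⟶ Ind.obj TD.obj₃ :=
    (adj₁.homEquiv _ _).symm (TD.mor₂ ≫ y) with hz
  have hzeq : adj₁.homEquiv _ _ z = TD.mor₂ ≫ y := (adj₁.homEquiv _ _).apply_symm_apply _
  have hzeq' : adj₁.unit.app TD.obj₂ ≫ (EqObj.forget act).map z = TD.mor₂ ≫ y := by
    have h := hzeq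
    rw [Adjunction.homEquiv_unit] at h
    exact h
  have hfz : Ind.map TD.mor₁ ≫ z = 0 := by
    apply (adj₁.homEquiv _ _).injective
    rw [Adjunction.homEquiv_naturality_left, hzeq, ← Category.assoc,
      comp_distTriang_mor_zero₁₂ _ hTD, zero_comp]
    rw [Adjunction.homEquiv_unit, Functor.map_zero, comp_zero]
  obtain ⟨φ₀, hφ₀⟩ := Pretriangulated.Triangle.yoneda_exact₂ _ hTz z hfz
  change Z ⟶ Ind.obj TD.obj₃ at φ₀
  change z = u ≫ φ₀ at hφ₀
  -- hφ₀ : z = u ≫ φ₀,  φ₀ : Z ⟶ Ind.obj TD.obj₃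
  have e2 : (EqObj.forget act).map u ≫ (EqObj.forget act).map φ₀ =
      (EqObj.forget act).map z := by
    rw [← (EqObj.forget act).map_comp]
    exact congrArg (EqObj.forget act).map hφ₀.symm
  set x : TD.obj₃ ⟶ (EqObj.forget act).obj (Ind.obj TD.obj₃) :=
    y - b₃ ≫ (EqObj.forget act).map φ₀ with hx
  have hgx : TD.mor₂ ≫ x = 0 := by
    have e3 : TD.mor₂ ≫ b₃ ≫ (EqObj.forget act).map φ₀ = TD.mor₂ ≫ y := by
      rw [← Category.assoc, hb₂', Category.assoc, e2, hzeq']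
    rw [hx, Preadditive.comp_sub, e3, sub_self]
  obtain ⟨w, hw⟩ := Pretriangulated.Triangle.yoneda_exact₂ TD.rotate
    (rot_of_distTriang _ hTD) x hgx
  change TD.obj₁⟦(1 : ℤ)⟧ ⟶ (EqObj.forget act).obj (Ind.obj TD.obj₃) at w
  change x = TD.mor₃ ≫ w at hw
  -- hw : x = TD.mor₃ ≫ w
  obtain ⟨χ, hχ⟩ := ind_shift_surj Ind adj₁ 1 TD.obj₁ (Ind.obj TD.obj₃) w
  set φ : Z ⟶ Ind.obj TD.obj₃ := φ₀ + v ≫ χ with hφdef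
  have hbv : b₃ ≫ (EqObj.forget act).map v =
      TD.mor₃ ≫ (adj₁.unit.app TD.obj₁)⟦(1 : ℤ)⟧' ≫
        ((EqObj.forget act).commShiftIso (1 : ℤ)).inv.app (Ind.obj TD.obj₁) := by
    rw [← Category.assoc, hb₃']
    simp only [Category.assoc, Iso.hom_inv_id_app, Functor.comp_obj, Category.comp_id]
  have key : b₃ ≫ (EqObj.forget act).map φ = y := by
    rw [hφdef, Functor.map_add, Preadditive.comp_add, (EqObj.forget act).map_comp,
      ← Category.assoc b₃, hbv]
    have h4 : TD.mor₃ ≫ ((adj₁.unit.app TD.obj₁)⟦(1 : ℤ)⟧' ≫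
        ((EqObj.forget act).commShiftIso (1 : ℤ)).inv.app (Ind.obj TD.obj₁) ≫
        (EqObj.forget act).map χ) = TD.mor₃ ≫ w := by
      rw [hχ]
    rw [Category.assoc, Category.assoc, h4, ← hw, hx]
    abel
  refine ⟨Z, u, v, (adj₁.homEquiv _ _).symm b₃, φ, hTz, ?_⟩
  apply (adj₁.homEquiv _ _).injective
  rw [Adjunction.homEquiv_naturality_right]
  have hh : adj₁.homEquiv _ _ ((adj₁.homEquiv TD.obj₃ Z).symm b₃) = b₃ :=
    (adj₁.homEquiv _ _).apply_symm_apply b₃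
  rw [hh, key, Adjunction.homEquiv_unit, CategoryTheory.Functor.map_id]
  exact hy.trans (Category.comp_id _).symm

end AuxTilting

open Pretriangulated in
/-- Let `D` be an idempotent-complete triangulated category with an admissible
`G`-action, `|G|` invertible in `D`, and `D^G` carrying the canonical triangulated
structure.  If `T` is a `G`-invariant tilting object of `D`, then `Ind(T)` is a tilting
object of `D^G`. -/
theorem induction_of_tilting
    {D : Type u} [Category.{v} D] [Preadditive D] [HasZeroObject D]
    [HasShift D ℤ] [∀ n : ℤ, (shiftFunctor D n).Additive] [Pretriangulated D]
    [HasFiniteBiproducts D] [IsIdempotentComplete D]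
    [Fintype G] (act : GAction G D) [∀ g : G, (act.F g).Additive]
    [∀ g : G, (act.F g).CommShift ℤ]
    (hadm : AdmissibleOn act)
    (hG : NatInvertibleIn (Fintype.card G) D)
    [HasShift (EqObj act) ℤ] [∀ n : ℤ, (shiftFunctor (EqObj act) n).Additive]
    [(EqObj.forget act).CommShift ℤ] [Pretriangulated (EqObj act)]
    (hdist : ∀ T : Triangle (EqObj act),
      (T ∈ distTriang (EqObj act)) ↔
        ((EqObj.forget act).mapTriangle.obj T ∈ distTriang D))
    (Ind : D ⥤ EqObj act) (hInd : IsInduction act Ind)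
    (adj₁ : Ind ⊣ EqObj.forget act) (adj₂ : EqObj.forget act ⊣ Ind)
    (hcomp : ∀ X : D, adj₁.unit.app X ≫ adj₂.counit.app X = 𝟙 X)
    (T : D) (hGinv : ∀ g : G, Nonempty ((act.F g).obj T ≅ T))
    (hT : IsTilting T) :
    IsTilting (Ind.obj T) := by
  constructor
  · -- vanishing of self-extensions in nonzero degrees
    intro i hi f
    obtain ⟨isoI, -⟩ := hInd
    set Bf : G → D := fun g => (act.F g).obj T with hBf
    set e : (EqObj.forget act).obj (Ind.obj T) ≅ ⨁ Bf := isoI T with he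
    haveI : Limits.PreservesBiproduct Bf (shiftFunctor D i) :=
      preservesBiproduct_of_additive' (shiftFunctor D i) Bf
    set sb := Functor.mapBiproduct (shiftFunctor D i) Bf with hsb
    set q : (EqObj.forget act).obj (Ind.obj T) ⟶ ((EqObj.forget act).obj (Ind.obj T))⟦i⟧ :=
      (EqObj.forget act).map f ≫ ((EqObj.forget act).commShiftIso i).hom.app (Ind.obj T)
      with hq
    set M : ⨁ Bf ⟶ ⨁ ((shiftFunctor D i).obj ∘ Bf) :=
      e.inv ≫ q ≫ (shiftFunctor D i).map e.hom ≫ sb.hom with hM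
    have hcomp0 : ∀ g h : G,
        biproduct.ι Bf g ≫ M ≫ biproduct.π ((shiftFunctor D i).obj ∘ Bf) h = 0 := by
      intro g h
      set rg := (hGinv g).some with hrg
      set rh := (hGinv h).some with hrh
      have hρ := hT.1 i hi (rg.inv ≫
        (biproduct.ι Bf g ≫ M ≫ biproduct.π ((shiftFunctor D i).obj ∘ Bf) h) ≫
          (shiftFunctor D i).map rh.hom)
      have h1 : (biproduct.ι Bf g ≫ M ≫ biproduct.π ((shiftFunctor D i).obj ∘ Bf) h) ≫
          (shiftFunctor D i).map rh.hom = 0 :=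
        (cancel_epi rg.inv).1 (by rw [comp_zero]; exact hρ)
      exact (cancel_mono ((shiftFunctor D i).map rh.hom)).1 (by rw [zero_comp]; exact h1)
    have hM0 : M = 0 := by
      apply biproduct.hom_ext
      intro h
      apply biproduct.hom_ext'
      intro g
      simpa using hcomp0 g h
    have hq0 : q = 0 := by
      have h2 : q ≫ ((shiftFunctor D i).map e.hom ≫ sb.hom) = 0 := by
        apply (cancel_epi e.inv).1
        simpa [hM, Category.assoc] using hM0
      have h3 : q ≫ ((shiftFunctor D i).map e.hom ≫ sb.hom) =
          0 ≫ ((shiftFunctor D i).map e.hom ≫ sb.hom) := by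
        rw [h2, zero_comp]
      exact (cancel_mono _).1 h3
    have hf0 : (EqObj.forget act).map f = 0 := by
      have h5 : (EqObj.forget act).map f ≫
          ((EqObj.forget act).commShiftIso i).hom.app (Ind.obj T) =
          0 ≫ ((EqObj.forget act).commShiftIso i).hom.app (Ind.obj T) := by
        rw [zero_comp, ← hq, hq0]
      exact (cancel_mono _).1 h5
    exact EqObj.hom_ext (by rw [EqObj.zero_f]; exact hf0)
  · -- classical generation
    intro S hS hTS X
    obtain ⟨hiso, hshift, hretract, hext⟩ := hS
    have key : ∀ Y : D, Ind.obj Y ∈ S := by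
      intro Y
      refine hT.2 {Y : D | Ind.obj Y ∈ S} ⟨?_, ?_, ?_, ?_⟩ hTS Y
      · -- closed under isomorphism
        rintro A hA B ⟨eAB⟩
        exact hiso _ hA _ ⟨Ind.mapIso eAB⟩
      · -- closed under shifts
        intro A hA n
        obtain ⟨b, hb⟩ := ind_shift_surj Ind adj₁ n A (Ind.obj (A⟦n⟧)) (adj₁.unit.app (A⟦n⟧))
        set κ : A⟦n⟧ ⟶ (EqObj.forget act).obj ((Ind.obj A)⟦n⟧) :=
          (adj₁.unit.app A)⟦n⟧' ≫
            ((EqObj.forget act).commShiftIso n).inv.app (Ind.obj A) with hκ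
        set a : Ind.obj (A⟦n⟧) ⟶ (Ind.obj A)⟦n⟧ := (adj₁.homEquiv _ _).symm κ with ha
        have hab : a ≫ b = 𝟙 (Ind.obj (A⟦n⟧)) := by
          apply (adj₁.homEquiv _ _).injective
          rw [Adjunction.homEquiv_naturality_right]
          have h1 : adj₁.homEquiv _ _ a = κ := (adj₁.homEquiv _ _).apply_symm_apply κ
          rw [h1, Adjunction.homEquiv_unit, CategoryTheory.Functor.map_id, hκ,
            Category.assoc]
          rw [hb]
          exact (Category.comp_id _).symm
        exact hretract _ (hshift _ hA n) _ a b hab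
      · -- closed under retracts
        intro A hA B s r hsr
        exact hretract _ hA _ (Ind.map s) (Ind.map r)
          (by rw [← Ind.map_comp, hsr, Ind.map_id])
      · -- closed under extensions
        intro Tr hTr h1 h2
        obtain ⟨Z, u, v, σ, τ, hmem, hστ⟩ := ind_cone_retract Ind adj₁ hdist Tr hTr
        have hZ : Z ∈ S := hext _ hmem h1 h2
        exact hretract _ hZ _ σ τ hστ
    obtain ⟨s, r, hsr⟩ := retract_of_ind Ind adj₁ X
    exact hretract _ (key _) _ s r hsr
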